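/- Let X = L^1(𝕋^2) (complex-valued, with respect to the Haar probability measure on 𝕋^2) and define x_n ∈ X by x_n(w_1,w_2) = w_1^k if n = 2^k for some integer k ≥ 0, and x_n(w_1,w_2) = w_2^{2^n} otherwise. Then there exists C ≥ 1 such that for every N and all scalars a_1,…,a_N ∈ ℂ: E_ε (∫_𝕋 ‖∑_{n=1}^N ε_n a_n x_n z^n‖_X^2 dz)^{1/2} ≤ C (∫_𝕋 ‖∑_{n=1}^N a_n x_n z^n‖_X^2 dz)^{1/2}; that is, (x_n z^n)_n is RUC in H_2(𝕋, X). -/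

import Mathlib

open MeasureTheory TopologicalSpace

noncomputable section

instance : MeasurableSpace Circle := borel Circle
instance : BorelSpace Circle := ⟨rfl⟩

/-- The Haar probability measure on the circle `𝕋 = {z : ℂ, |z| = 1}`. -/
def muT : Measure Circle := Measure.haarMeasure ⊤

/-- The Haar probability measure on the infinite polytorus `𝕋^ℕ`
(equivalently, the product of the Haar probability measures of the factors). -/
def muTN : Measure (ℕ → Circle) := Measure.haarMeasure ⊤

instance : IsProbabilityMeasure muT := by
  constructor
  simpa [muT] using Measure.haarMeasure_self (K₀ := (⊤ : PositiveCompacts Circle))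

instance : IsProbabilityMeasure muTN := by
  constructor
  simpa [muTN] using Measure.haarMeasure_self (K₀ := (⊤ : PositiveCompacts (ℕ → Circle)))

/-- The monomial `z ↦ z^{α(n)}`, where `α(n)` is the finitely supported sequence of exponents
in the prime factorization `n = ∏_i pᵢ^{αᵢ(n)}`, the primes `pᵢ = Nat.nth Nat.Prime i` being
listed in increasing order.  (For `n ≥ 1`, every prime factor of `n` is among the first `n`
primes, so the range `Finset.range n` captures all nonzero exponents.) -/
def mon (n : ℕ) (z : ℕ → Circle) : ℂ :=
  ∏ i ∈ Finset.range n, (z i : ℂ) ^ (Nat.factorization n (Nat.nth Nat.Prime i))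

/-- The complex sign `±1` associated to a boolean sign choice. -/
def sgn {N : ℕ} (ε : Fin N → Bool) (n : Fin N) : ℂ := if ε n then 1 else -1

/-- The average `E_ε = 2^{-N} ∑_{ε ∈ {-1,1}^N}` over all choices of `N` signs. -/
def Eavg (N : ℕ) (F : (Fin N → Bool) → ℝ) : ℝ :=
  (2 ^ N : ℝ)⁻¹ * ∑ ε : Fin N → Bool, F ε

/-- The `H_p(X)`-norm of the Dirichlet polynomial `∑_{n=1}^N x_n n^{-s}`, defined via the Bohr
transform as `(∫_{𝕋^ℕ} ‖∑_{n=1}^N x_n z^{α(n)}‖_X^p dz)^{1/p}`.  Here, for `n : Fin N`,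
`x n` is the coefficient of `((n : ℕ) + 1)^{-s}`. -/
def Hnorm (p : ℝ) {X : Type*} [NormedAddCommGroup X] [NormedSpace ℂ X]
    (N : ℕ) (x : Fin N → X) : ℝ :=
  (∫ z : ℕ → Circle, ‖∑ n : Fin N, mon ((n : ℕ) + 1) z • x n‖ ^ p ∂muTN) ^ (1 / p)

open Classical in
/-- The function `(w₁, w₂) ↦ w₁^k` if `n = 2^k` for some `k ≥ 0`, and `(w₁, w₂) ↦ w₂^{2^n}`
otherwise.  (When `n = 2^k` we have `k = Nat.log 2 n`.) -/
def fnPow2 (n : ℕ) : Circle × Circle → ℂ :=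
  fun w => if ∃ k, n = 2 ^ k then (w.1 : ℂ) ^ (Nat.log 2 n) else (w.2 : ℂ) ^ (2 ^ n)

lemma memLp_fnPow2 (n : ℕ) : MemLp (fnPow2 n) 1 (muT.prod muT) := by
  have hc : Continuous (fnPow2 n) := by
    unfold fnPow2
    split
    · exact (continuous_subtype_val.comp continuous_fst).pow _
    · exact (continuous_subtype_val.comp continuous_snd).pow _
  refine MemLp.of_bound hc.aestronglyMeasurable 1 (Filter.Eventually.of_forall ?_)
  intro w
  unfold fnPow2
  split <;> simp [Circle.norm_coe]

/-- The element `x_n` of `X = L¹(𝕋²)`: the class of `w ↦ w₁^k` if `n = 2^k`, and of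
`w ↦ w₂^{2^n}` otherwise. -/
def xPow2 (n : ℕ) : Lp ℂ 1 (muT.prod muT) := (memLp_fnPow2 n).toLp _


section myproof
open Complex


lemma two_pow_pos' (a : ℕ) : 0 < 2^a := Nat.pow_pos (by norm_num)

lemma two_pow_add_eq (a b c d : ℕ) (h : 2^a + 2^b = 2^c + 2^d) :
    (a = c ∧ b = d) ∨ (a = d ∧ b = c) := by
  induction a generalizing b c d with
  | zero =>
    rcases c with _ | c
    · left
      refine ⟨rfl, Nat.pow_right_injective le_rfl ?_⟩
      simpa using h
    · rcases d with _ | d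
      · right
        have hbc : (2:ℕ)^b = 2^(c+1) := by simp only [pow_zero] at h; omega
        exact ⟨rfl, Nat.pow_right_injective le_rfl hbc⟩
      · exfalso
        rcases b with _ | b
        · have h1 : (2:ℕ) ≤ 2^(c+1) := Nat.one_lt_two_pow (by omega)
          have h2 : (2:ℕ) ≤ 2^(d+1) := Nat.one_lt_two_pow (by omega)
          simp only [pow_zero] at h
          omega
        · have e1 : (2:ℕ)^(b+1) = 2^b*2 := pow_succ 2 b
          have e2 : (2:ℕ)^(c+1) = 2^c*2 := pow_succ 2 c
          have e3 : (2:ℕ)^(d+1) = 2^d*2 := pow_succ 2 d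
          simp only [pow_zero] at h
          omega
  | succ a ih =>
    rcases b with _ | b
    · rcases c with _ | c
      · right
        have hbc : (2:ℕ)^(a+1) = 2^d := by simp only [pow_zero] at h; omega
        exact ⟨Nat.pow_right_injective le_rfl hbc, rfl⟩
      · rcases d with _ | d
        · left
          have hbc : (2:ℕ)^(a+1) = 2^(c+1) := by simp only [pow_zero] at h; omega
          exact ⟨Nat.pow_right_injective le_rfl hbc, rfl⟩
        · exfalso
          have e1 : (2:ℕ)^(a+1) = 2^a*2 := pow_succ 2 a
          have e2 : (2:ℕ)^(c+1) = 2^c*2 := pow_succ 2 c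
          have e3 : (2:ℕ)^(d+1) = 2^d*2 := pow_succ 2 d
          simp only [pow_zero] at h
          omega
    · rcases c with _ | c
      · rcases d with _ | d
        · exfalso
          have h1 : (2:ℕ) ≤ 2^(a+1) := Nat.one_lt_two_pow (by omega)
          have h2 : (2:ℕ) ≤ 2^(b+1) := Nat.one_lt_two_pow (by omega)
          simp only [pow_zero] at h
          omega
        · exfalso
          have e1 : (2:ℕ)^(a+1) = 2^a*2 := pow_succ 2 a
          have e2 : (2:ℕ)^(b+1) = 2^b*2 := pow_succ 2 b
          have e3 : (2:ℕ)^(d+1) = 2^d*2 := pow_succ 2 d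
          simp only [pow_zero] at h
          omega
      · rcases d with _ | d
        · exfalso
          have e1 : (2:ℕ)^(a+1) = 2^a*2 := pow_succ 2 a
          have e2 : (2:ℕ)^(b+1) = 2^b*2 := pow_succ 2 b
          have e3 : (2:ℕ)^(c+1) = 2^c*2 := pow_succ 2 c
          simp only [pow_zero] at h
          omega
        · have h' : 2^a + 2^b = 2^c + 2^d := by
            have e1 : (2:ℕ)^(a+1) = 2^a*2 := pow_succ 2 a
            have e2 : (2:ℕ)^(b+1) = 2^b*2 := pow_succ 2 b
            have e3 : (2:ℕ)^(c+1) = 2^c*2 := pow_succ 2 c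
            have e4 : (2:ℕ)^(d+1) = 2^d*2 := pow_succ 2 d
            omega
          rcases ih b c d h' with ⟨h1, h2⟩ | ⟨h1, h2⟩
          · left; omega
          · right; omega

open Classical in
def kap (m : ℕ) : ℕ := if ∃ k, m = 2 ^ k then Nat.log 2 m else 0

open Classical in
def lam (m : ℕ) : ℕ := if ∃ k, m = 2 ^ k then 0 else 2 ^ m

lemma pow_log_of_p2 {m : ℕ} (h : ∃ k, m = 2 ^ k) : 2 ^ Nat.log 2 m = m := by
  obtain ⟨k, rfl⟩ := h
  rw [Nat.log_pow (by norm_num)]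
lemma single_pow_eq {x l l' : ℕ} (h : 2^x = 2^l + 2^l') : l = l' ∧ x = l + 1 := by
  rcases x with _ | t
  · simp only [pow_zero] at h
    have := (Nat.pow_pos (show 0 < 2 by norm_num) : 0 < 2 ^ l)
    have := (Nat.pow_pos (show 0 < 2 by norm_num) : 0 < 2 ^ l')
    omega
  · have h' : 2^t + 2^t = 2^l + 2^l' := by
      have : (2:ℕ)^(t+1) = 2^t + 2^t := by rw [pow_succ]; omega
      omega
    rcases two_pow_add_eq t t l l' h' with ⟨ha, hb⟩ | ⟨ha, hb⟩ <;> omega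

lemma key_inj (m m' l l' : ℕ)
    (h1 : m + m' = l + l')
    (h2 : kap m + kap m' = kap l + kap l')
    (h3 : lam m + lam m' = lam l + lam l') :
    (m = l ∧ m' = l') ∨ (m = l' ∧ m' = l) := by
  classical
  unfold kap at h2
  unfold lam at h3
  by_cases pm : ∃ k, m = 2 ^ k <;> by_cases pm' : ∃ k, m' = 2 ^ k <;>
    by_cases pl : ∃ k, l = 2 ^ k <;> by_cases pl' : ∃ k, l' = 2 ^ k
  · rw [if_pos pm, if_pos pm', if_pos pl, if_pos pl'] at h2 h3
    have em := pow_log_of_p2 pm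
    have em' := pow_log_of_p2 pm'
    have el := pow_log_of_p2 pl
    have el' := pow_log_of_p2 pl'
    have h' : 2 ^ Nat.log 2 m + 2 ^ Nat.log 2 m' = 2 ^ Nat.log 2 l + 2 ^ Nat.log 2 l' := by omega
    rcases two_pow_add_eq _ _ _ _ h' with ⟨e1, e2⟩ | ⟨e1, e2⟩
    · left
      constructor
      · rw [← em, ← el, e1]
      · rw [← em', ← el', e2]
    · right
      constructor
      · rw [← em, ← el', e1]
      · rw [← em', ← el, e2]
  · rw [if_pos pm, if_pos pm', if_pos pl, if_neg pl'] at h2 h3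
    exfalso
    have := (Nat.pow_pos (show 0 < 2 by norm_num) : 0 < 2 ^ l')
    omega
  · rw [if_pos pm, if_pos pm', if_neg pl, if_pos pl'] at h2 h3
    exfalso
    have := (Nat.pow_pos (show 0 < 2 by norm_num) : 0 < 2 ^ l)
    omega
  · rw [if_pos pm, if_pos pm', if_neg pl, if_neg pl'] at h2 h3
    exfalso
    have := (Nat.pow_pos (show 0 < 2 by norm_num) : 0 < 2 ^ l)
    have := (Nat.pow_pos (show 0 < 2 by norm_num) : 0 < 2 ^ l')
    omega
  · rw [if_pos pm, if_neg pm', if_pos pl, if_pos pl'] at h2 h3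
    exfalso
    have := (Nat.pow_pos (show 0 < 2 by norm_num) : 0 < 2 ^ m')
    omega
  · rw [if_pos pm, if_neg pm', if_pos pl, if_neg pl'] at h2 h3
    left
    have e1 : m = l := by
      have em := pow_log_of_p2 pm
      have el := pow_log_of_p2 pl
      have hlog : Nat.log 2 m = Nat.log 2 l := by omega
      rw [← em, ← el, hlog]
    have e2 : m' = l' := Nat.pow_right_injective le_rfl (show (2:ℕ)^m' = 2^l' by omega)
    exact ⟨e1, e2⟩
  · rw [if_pos pm, if_neg pm', if_neg pl, if_pos pl'] at h2 h3
    right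
    have e1 : m = l' := by
      have em := pow_log_of_p2 pm
      have el := pow_log_of_p2 pl'
      have hlog : Nat.log 2 m = Nat.log 2 l' := by omega
      rw [← em, ← el, hlog]
    have e2 : m' = l := Nat.pow_right_injective le_rfl (show (2:ℕ)^m' = 2^l by omega)
    exact ⟨e1, e2⟩
  · rw [if_pos pm, if_neg pm', if_neg pl, if_neg pl'] at h2 h3
    exfalso
    have em := pow_log_of_p2 pm
    have hz : Nat.log 2 m = 0 := by omega
    rw [hz, pow_zero] at em
    obtain ⟨e1, e2⟩ := single_pow_eq (show (2:ℕ)^m' = 2^l + 2^l' by omega)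
    exact pl ⟨1, by rw [pow_one]; omega⟩
  · rw [if_neg pm, if_pos pm', if_pos pl, if_pos pl'] at h2 h3
    exfalso
    have := (Nat.pow_pos (show 0 < 2 by norm_num) : 0 < 2 ^ m)
    omega
  · rw [if_neg pm, if_pos pm', if_pos pl, if_neg pl'] at h2 h3
    right
    have e1 : m' = l := by
      have em := pow_log_of_p2 pm'
      have el := pow_log_of_p2 pl
      have hlog : Nat.log 2 m' = Nat.log 2 l := by omega
      rw [← em, ← el, hlog]
    have e2 : m = l' := Nat.pow_right_injective le_rfl (show (2:ℕ)^m = 2^l' by omega)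
    exact ⟨e2, e1⟩
  · rw [if_neg pm, if_pos pm', if_neg pl, if_pos pl'] at h2 h3
    left
    have e1 : m' = l' := by
      have em := pow_log_of_p2 pm'
      have el := pow_log_of_p2 pl'
      have hlog : Nat.log 2 m' = Nat.log 2 l' := by omega
      rw [← em, ← el, hlog]
    have e2 : m = l := Nat.pow_right_injective le_rfl (show (2:ℕ)^m = 2^l by omega)
    exact ⟨e2, e1⟩
  · rw [if_neg pm, if_pos pm', if_neg pl, if_neg pl'] at h2 h3
    exfalso
    have em := pow_log_of_p2 pm'
    have hz : Nat.log 2 m' = 0 := by omega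
    rw [hz, pow_zero] at em
    obtain ⟨e1, e2⟩ := single_pow_eq (show (2:ℕ)^m = 2^l + 2^l' by omega)
    exact pl ⟨1, by rw [pow_one]; omega⟩
  · rw [if_neg pm, if_neg pm', if_pos pl, if_pos pl'] at h2 h3
    exfalso
    have := (Nat.pow_pos (show 0 < 2 by norm_num) : 0 < 2 ^ m)
    have := (Nat.pow_pos (show 0 < 2 by norm_num) : 0 < 2 ^ m')
    omega
  · rw [if_neg pm, if_neg pm', if_pos pl, if_neg pl'] at h2 h3
    exfalso
    have el := pow_log_of_p2 pl
    have hz : Nat.log 2 l = 0 := by omega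
    rw [hz, pow_zero] at el
    obtain ⟨e1, e2⟩ := single_pow_eq (show (2:ℕ)^l' = 2^m + 2^m' by omega)
    exact pm ⟨1, by rw [pow_one]; omega⟩
  · rw [if_neg pm, if_neg pm', if_neg pl, if_pos pl'] at h2 h3
    exfalso
    have el := pow_log_of_p2 pl'
    have hz : Nat.log 2 l' = 0 := by omega
    rw [hz, pow_zero] at el
    obtain ⟨e1, e2⟩ := single_pow_eq (show (2:ℕ)^l = 2^m + 2^m' by omega)
    exact pm ⟨1, by rw [pow_one]; omega⟩
  · rw [if_neg pm, if_neg pm', if_neg pl, if_neg pl'] at h2 h3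
    rcases two_pow_add_eq m m' l l' (by omega) with ⟨e1, e2⟩ | ⟨e1, e2⟩
    · left; exact ⟨e1, e2⟩
    · right; exact ⟨e1, e2⟩

instance : muT.IsMulLeftInvariant :=
  (Measure.isMulLeftInvariant_haarMeasure (⊤ : PositiveCompacts Circle) : _)

lemma circle_char_integral (j j' : ℕ) :
    ∫ z : Circle, (z : ℂ) ^ j * (starRingEnd ℂ) ((z : ℂ) ^ j') ∂muT
      = if j = j' then 1 else 0 := by
  by_cases h : j = j'
  · subst h
    rw [if_pos rfl]
    have hone : ∀ z : Circle, (z : ℂ) ^ j * (starRingEnd ℂ) ((z : ℂ) ^ j) = 1 := by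
      intro z
      rw [Complex.mul_conj]
      norm_cast
      rw [Complex.normSq_eq_norm_sq]
      simp [norm_pow, Circle.norm_coe]
    simp only [hone]
    simp
  · rw [if_neg h]
    set δ : ℝ := (j : ℝ) - (j' : ℝ) with hδdef
    have hδ : δ ≠ 0 := by
      simp only [hδdef]
      intro hc
      apply h
      have : (j : ℝ) = j' := by linarith
      exact_mod_cast this
    set c : Circle := Circle.exp (Real.pi / δ) with hc
    have key : ∀ (n : ℕ) (t : ℝ),
        ((Circle.exp t : Circle) : ℂ) ^ n = Complex.exp ((n * t : ℝ) * Complex.I) := by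
      intro n t
      rw [Circle.coe_exp, ← Complex.exp_nat_mul]
      congr 1
      push_cast
      ring
    have hmul : ((c : ℂ)) ^ j * (starRingEnd ℂ) ((c : ℂ) ^ j') = -1 := by
      rw [hc, key j _, key j' _, ← Complex.exp_conj]
      have hconj : (starRingEnd ℂ) (((j' * (Real.pi / δ) : ℝ) : ℂ) * Complex.I)
          = ((-(j' * (Real.pi / δ)) : ℝ) : ℂ) * Complex.I := by
        rw [map_mul, Complex.conj_ofReal, Complex.conj_I]
        push_cast
        ring
      rw [hconj, ← Complex.exp_add]
      have harg : ((j * (Real.pi / δ) : ℝ) : ℂ) * Complex.I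
            + ((-(j' * (Real.pi / δ)) : ℝ) : ℂ) * Complex.I
          = ((Real.pi : ℝ) : ℂ) * Complex.I := by
        rw [← add_mul, ← Complex.ofReal_add]
        have hreal : (j * (Real.pi / δ) : ℝ) + (-(j' * (Real.pi / δ)) : ℝ) = Real.pi := by
          have e1 : (j * (Real.pi / δ) : ℝ) + (-(j' * (Real.pi / δ)) : ℝ)
              = (Real.pi / δ) * δ := by
            rw [hδdef]; ring
          rw [e1, div_mul_cancel₀ _ hδ]
        rw [hreal]
      rw [harg]
      exact Complex.exp_pi_mul_I
    have hinv := MeasureTheory.integral_mul_left_eq_self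
      (μ := muT) (fun z : Circle => (z : ℂ) ^ j * (starRingEnd ℂ) ((z : ℂ) ^ j')) c
    have hfun : ∀ z : Circle, ((c * z : Circle) : ℂ) ^ j * (starRingEnd ℂ) (((c * z : Circle) : ℂ) ^ j')
        = (-1) * ((z : ℂ) ^ j * (starRingEnd ℂ) ((z : ℂ) ^ j')) := by
      intro z
      push_cast
      rw [mul_pow, mul_pow, map_mul]
      calc (c:ℂ)^j * (z:ℂ)^j * ((starRingEnd ℂ) ((c:ℂ)^j') * (starRingEnd ℂ) ((z:ℂ)^j'))
          = ((c:ℂ)^j * (starRingEnd ℂ) ((c:ℂ)^j')) * ((z:ℂ)^j * (starRingEnd ℂ) ((z:ℂ)^j')) := by ring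
        _ = (-1) * ((z : ℂ) ^ j * (starRingEnd ℂ) ((z : ℂ) ^ j')) := by rw [hmul]
    simp only [hfun] at hinv
    rw [integral_const_mul] at hinv
    set I := ∫ z : Circle, (z : ℂ) ^ j * (starRingEnd ℂ) ((z : ℂ) ^ j') ∂muT
    have h2 : I + I = 0 := by linear_combination -hinv
    exact add_self_eq_zero.mp h2

abbrev Om := Circle × (Circle × Circle)
def mu3 : Measure Om := muT.prod (muT.prod muT)
instance : IsProbabilityMeasure mu3 := by unfold mu3; infer_instance

def psi (v : ℕ × ℕ × ℕ) (u : Om) : ℂ :=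
  (u.1 : ℂ) ^ v.1 * ((u.2.1 : ℂ) ^ v.2.1 * (u.2.2 : ℂ) ^ v.2.2)

lemma psi_cont (v : ℕ × ℕ × ℕ) : Continuous (psi v) := by
  unfold psi
  fun_prop

lemma norm_psi (v : ℕ × ℕ × ℕ) (u : Om) : ‖psi v u‖ = 1 := by
  unfold psi
  simp [norm_mul, norm_pow, Circle.norm_coe]

lemma psi_mul (v v' : ℕ × ℕ × ℕ) (u : Om) : psi v u * psi v' u = psi (v + v') u := by
  unfold psi
  simp [Prod.fst_add, Prod.snd_add, pow_add]
  ring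

lemma psi_integral (v v' : ℕ × ℕ × ℕ) :
    ∫ u, psi v u * (starRingEnd ℂ) (psi v' u) ∂mu3 = if v = v' then 1 else 0 := by
  have hrw : ∀ u : Om, psi v u * (starRingEnd ℂ) (psi v' u)
      = ((u.1 : ℂ) ^ v.1 * (starRingEnd ℂ) ((u.1 : ℂ) ^ v'.1)) *
        (((u.2.1 : ℂ) ^ v.2.1 * (starRingEnd ℂ) ((u.2.1 : ℂ) ^ v'.2.1)) *
         ((u.2.2 : ℂ) ^ v.2.2 * (starRingEnd ℂ) ((u.2.2 : ℂ) ^ v'.2.2))) := by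
    intro u
    unfold psi
    rw [map_mul, map_mul]
    ring
  simp only [hrw]
  rw [show (mu3 : Measure Om) = muT.prod (muT.prod muT) from rfl]
  rw [MeasureTheory.integral_prod_mul (μ := muT) (ν := muT.prod muT)
    (f := fun z : Circle => (z : ℂ) ^ v.1 * (starRingEnd ℂ) ((z : ℂ) ^ v'.1))
    (g := fun w : Circle × Circle =>
      ((w.1 : ℂ) ^ v.2.1 * (starRingEnd ℂ) ((w.1 : ℂ) ^ v'.2.1)) *
      ((w.2 : ℂ) ^ v.2.2 * (starRingEnd ℂ) ((w.2 : ℂ) ^ v'.2.2)))]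
  rw [MeasureTheory.integral_prod_mul (μ := muT) (ν := muT)
    (f := fun z : Circle => (z : ℂ) ^ v.2.1 * (starRingEnd ℂ) ((z : ℂ) ^ v'.2.1))
    (g := fun z : Circle => (z : ℂ) ^ v.2.2 * (starRingEnd ℂ) ((z : ℂ) ^ v'.2.2))]
  rw [circle_char_integral, circle_char_integral, circle_char_integral]
  by_cases h1 : v.1 = v'.1 <;> by_cases h2 : v.2.1 = v'.2.1 <;> by_cases h3 : v.2.2 = v'.2.2 <;>
    simp [h1, h2, h3, Prod.ext_iff]

section helper
variable {α : Type*} [MeasurableSpace α] [TopologicalSpace α] [OpensMeasurableSpace α]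
  [CompactSpace α] [Nonempty α] [SecondCountableTopology α]
  {μ : Measure α} [IsFiniteMeasure μ]

lemma cont_memLp {E : Type*} [NormedAddCommGroup E] {f : α → E} (hf : Continuous f)
    (p : ENNReal) : MemLp f p μ := by
  obtain ⟨x0, -, hx0⟩ := isCompact_univ.exists_isMaxOn Set.univ_nonempty
    (hf.norm.continuousOn)
  exact MemLp.of_bound hf.aestronglyMeasurable ‖f x0‖
    (Filter.Eventually.of_forall fun x => hx0 (Set.mem_univ x))

lemma cont_integrable {E : Type*} [NormedAddCommGroup E] {f : α → E} (hf : Continuous f) :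
    Integrable f μ :=
  memLp_one_iff_integrable.mp (cont_memLp hf 1)

end helper


lemma int_sq_complex {ι : Type*} [Fintype ι] (v : ι → ℕ × ℕ × ℕ) (c : ι → ℂ) :
    (↑(∫ u, ‖∑ n : ι, c n * psi (v n) u‖ ^ (2:ℕ) ∂mu3) : ℂ)
      = ∑ n : ι, ∑ m : ι, (c n * (starRingEnd ℂ) (c m)) * (if v n = v m then 1 else 0) := by
  have hcont : ∀ (n m : ι), Continuous (fun u : Om =>
      (c n * psi (v n) u) * (starRingEnd ℂ) (c m * psi (v m) u)) := by
    intro n m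
    exact ((continuous_const.mul (psi_cont (v n))).mul
      (Complex.continuous_conj.comp (continuous_const.mul (psi_cont (v m)))))
  have h0 : ∀ u : Om, ((∑ n : ι, c n * psi (v n) u) *
          (starRingEnd ℂ) (∑ n : ι, c n * psi (v n) u))
      = ((‖∑ n : ι, c n * psi (v n) u‖ ^ (2:ℕ) : ℝ) : ℂ) := by
    intro u
    rw [Complex.mul_conj, Complex.normSq_eq_norm_sq]
  have h1 : (↑(∫ u, ‖∑ n : ι, c n * psi (v n) u‖ ^ (2:ℕ) ∂mu3) : ℂ)
      = ∫ u, ((∑ n : ι, c n * psi (v n) u) *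
          (starRingEnd ℂ) (∑ n : ι, c n * psi (v n) u)) ∂mu3 := by
    simp only [h0]
    exact integral_ofReal.symm
  rw [h1]
  have h2 : ∀ u : Om, ((∑ n : ι, c n * psi (v n) u) *
          (starRingEnd ℂ) (∑ n : ι, c n * psi (v n) u))
      = ∑ n : ι, ∑ m : ι,
          (c n * psi (v n) u) * (starRingEnd ℂ) (c m * psi (v m) u) := by
    intro u
    rw [map_sum, Finset.sum_mul_sum]
  simp only [h2]
  rw [integral_finset_sum _ (fun n _ => integrable_finset_sum _
    (fun m _ => cont_integrable (hcont n m)))]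
  refine Finset.sum_congr rfl fun n _ => ?_
  rw [integral_finset_sum _ (fun m _ => cont_integrable (hcont n m))]
  refine Finset.sum_congr rfl fun m _ => ?_
  have h3 : ∀ u : Om, (c n * psi (v n) u) * (starRingEnd ℂ) (c m * psi (v m) u)
      = (c n * (starRingEnd ℂ) (c m)) * (psi (v n) u * (starRingEnd ℂ) (psi (v m) u)) := by
    intro u; rw [map_mul]; ring
  simp only [h3]
  rw [MeasureTheory.integral_const_mul, psi_integral]

variable {N : ℕ}

lemma int_sq_eq (v : Fin N → ℕ × ℕ × ℕ) (hv : Function.Injective v) (c : Fin N → ℂ) :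
    ∫ u, ‖∑ n : Fin N, c n * psi (v n) u‖ ^ (2:ℕ) ∂mu3 = ∑ n : Fin N, ‖c n‖ ^ (2:ℕ) := by
  have key2 : (↑(∫ u, ‖∑ n : Fin N, c n * psi (v n) u‖ ^ (2:ℕ) ∂mu3) : ℂ)
      = ↑(∑ n : Fin N, ‖c n‖ ^ (2:ℕ)) := by
    rw [int_sq_complex]
    push_cast
    refine Finset.sum_congr rfl fun n _ => ?_
    rw [Finset.sum_eq_single n]
    · rw [if_pos rfl, mul_one, Complex.mul_conj, Complex.normSq_eq_norm_sq]
      norm_cast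
    · intro m _ hm
      rw [if_neg (fun he => hm (hv he).symm), mul_zero]
    · intro hn; exact absurd (Finset.mem_univ n) hn
  exact_mod_cast key2

lemma int_four_le (v : Fin N → ℕ × ℕ × ℕ)
    (hv2 : ∀ p q : Fin N × Fin N, v p.1 + v p.2 = v q.1 + v q.2 → q = p ∨ q = Prod.swap p)
    (c : Fin N → ℂ) :
    ∫ u, ‖∑ n : Fin N, c n * psi (v n) u‖ ^ (4:ℕ) ∂mu3
      ≤ 2 * (∑ n : Fin N, ‖c n‖ ^ (2:ℕ)) ^ (2:ℕ) := by
  classical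
  set d : Fin N × Fin N → ℂ := fun p => c p.1 * c p.2 with hd
  set K : Fin N × Fin N → ℕ × ℕ × ℕ := fun p => v p.1 + v p.2 with hK
  have hSq : ∀ u : Om, ‖∑ n : Fin N, c n * psi (v n) u‖ ^ (4:ℕ)
      = ‖∑ p : Fin N × Fin N, d p * psi (K p) u‖ ^ (2:ℕ) := by
    intro u
    have e1 : (∑ n : Fin N, c n * psi (v n) u) ^ (2:ℕ)
        = ∑ p : Fin N × Fin N, d p * psi (K p) u := by
      rw [sq, Finset.sum_mul_sum, ← Finset.univ_product_univ, Finset.sum_product]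
      refine Finset.sum_congr rfl fun n _ => Finset.sum_congr rfl fun m _ => ?_
      rw [hd, hK]
      simp only []
      rw [← psi_mul]
      ring
    rw [← e1, norm_pow]
    ring
  have hnn : 0 ≤ ∫ u, ‖∑ n : Fin N, c n * psi (v n) u‖ ^ (4:ℕ) ∂mu3 :=
    integral_nonneg fun u => by positivity
  have habs : ∫ u, ‖∑ n : Fin N, c n * psi (v n) u‖ ^ (4:ℕ) ∂mu3
      = ‖(↑(∫ u, ‖∑ p : Fin N × Fin N, d p * psi (K p) u‖ ^ (2:ℕ) ∂mu3) : ℂ)‖ := by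
    simp only [hSq] at hnn ⊢
    rw [Complex.norm_real, Real.norm_of_nonneg hnn]
  rw [habs, int_sq_complex]
  calc ‖∑ p : Fin N × Fin N, ∑ q : Fin N × Fin N,
        (d p * (starRingEnd ℂ) (d q)) * (if K p = K q then 1 else 0)‖
      ≤ ∑ p : Fin N × Fin N, ∑ q : Fin N × Fin N,
        (if K p = K q then ‖d p‖ * ‖d q‖ else 0) := by
        refine (norm_sum_le _ _).trans (Finset.sum_le_sum fun p _ => ?_)
        refine (norm_sum_le _ _).trans (Finset.sum_le_sum fun q _ => ?_)
        by_cases hpq : K p = K q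
        · rw [if_pos hpq, if_pos hpq, mul_one, norm_mul, RCLike.norm_conj]
        · rw [if_neg hpq, if_neg hpq, mul_zero, norm_zero]
    _ ≤ ∑ p : Fin N × Fin N, 2 * ‖d p‖ ^ (2:ℕ) := by
        refine Finset.sum_le_sum fun p _ => ?_
        have hbound : ∀ q : Fin N × Fin N, (if K p = K q then ‖d p‖ * ‖d q‖ else 0)
            ≤ (if q = p then ‖d p‖ ^ (2:ℕ) else 0)
              + (if q = Prod.swap p then ‖d p‖ ^ (2:ℕ) else 0) := by
          intro q
          by_cases hKq : K p = K q
          · have hds : ‖d q‖ = ‖d p‖ := by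
              rcases hv2 p q hKq with rfl | rfl
              · rfl
              · rw [hd]
                simp only [Prod.fst_swap, Prod.snd_swap, norm_mul]
                ring
            rw [if_pos hKq, hds, ← sq]
            rcases hv2 p q hKq with rfl | rfl
            · rw [if_pos rfl]
              have : (0:ℝ) ≤ (if q = Prod.swap q then ‖d q‖ ^ (2:ℕ) else 0) := by positivity
              linarith
            · rw [if_pos rfl]
              have : (0:ℝ) ≤ (if Prod.swap p = p then ‖d p‖ ^ (2:ℕ) else 0) := by
                positivity
              linarith
          · rw [if_neg hKq]
            have h1 : (0:ℝ) ≤ (if q = p then ‖d p‖ ^ (2:ℕ) else 0) := by positivity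
            have h2 : (0:ℝ) ≤ (if q = Prod.swap p then ‖d p‖ ^ (2:ℕ) else 0) := by positivity
            linarith
        refine (Finset.sum_le_sum fun q _ => hbound q).trans ?_
        rw [Finset.sum_add_distrib, Finset.sum_ite_eq' Finset.univ p,
          Finset.sum_ite_eq' Finset.univ (Prod.swap p)]
        simp only [Finset.mem_univ, if_true]
        linarith
    _ = 2 * (∑ n : Fin N, ‖c n‖ ^ (2:ℕ)) ^ (2:ℕ) := by
        rw [← Finset.mul_sum]
        congr 1
        rw [sq, Finset.sum_mul_sum, ← Finset.univ_product_univ, Finset.sum_product]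
        refine Finset.sum_congr rfl fun n _ => Finset.sum_congr rfl fun m _ => ?_
        rw [hd]
        simp only [norm_mul]
        ring

def xiv (m : ℕ) : ℕ × ℕ × ℕ := (m, kap m, lam m)

lemma fnPow2_eq (m : ℕ) (w : Circle × Circle) :
    fnPow2 m w = (w.1 : ℂ) ^ (kap m) * (w.2 : ℂ) ^ (lam m) := by
  unfold fnPow2 kap lam
  by_cases h : ∃ k, m = 2 ^ k
  · rw [if_pos h, if_pos h, if_pos h, pow_zero, mul_one]
  · rw [if_neg h, if_neg h, if_neg h, pow_zero, one_mul]

lemma psi_xiv (m : ℕ) (u : Om) : psi (xiv m) u = (u.1 : ℂ) ^ m * fnPow2 m u.2 := by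
  rw [fnPow2_eq]
  rfl

lemma fnPow2_cont (m : ℕ) : Continuous (fnPow2 m) := by
  unfold fnPow2
  split
  · exact (continuous_subtype_val.comp continuous_fst).pow _
  · exact (continuous_subtype_val.comp continuous_snd).pow _

lemma Lp_coeFn_sum {α E : Type*} [MeasurableSpace α] {μ : Measure α} [NormedAddCommGroup E]
    {p : ENNReal} {ι : Type*} (s : Finset ι) (f : ι → Lp E p μ) :
    ⇑(∑ i ∈ s, f i) =ᵐ[μ] fun a => ∑ i ∈ s, f i a := by
  classical
  induction s using Finset.induction_on with
  | empty =>
      simp only [Finset.sum_empty]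
      exact MeasureTheory.Lp.coeFn_zero (E := E) (p := p) (μ := μ)
  | @insert i s hnotmem ih =>
      rw [Finset.sum_insert hnotmem]
      filter_upwards [Lp.coeFn_add (f i) (∑ j ∈ s, f j), ih] with a h1 h2
      rw [h1]
      simp only [Pi.add_apply, h2, Finset.sum_insert hnotmem]

variable {N : ℕ}

lemma norm_sum_xPow2 (b : Fin N → ℂ) :
    ‖∑ n : Fin N, b n • xPow2 ((n : ℕ) + 1)‖
      = ∫ w, ‖∑ n : Fin N, b n * fnPow2 ((n : ℕ) + 1) w‖ ∂(muT.prod muT) := by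
  rw [MeasureTheory.L1.norm_eq_integral_norm]
  refine integral_congr_ae ?_
  have hae : ∀ᵐ w ∂(muT.prod muT), ∀ n : Fin N,
      ⇑(b n • xPow2 ((n : ℕ) + 1)) w = b n * fnPow2 ((n : ℕ) + 1) w := by
    rw [MeasureTheory.ae_all_iff]
    intro n
    filter_upwards [Lp.coeFn_smul (b n) (xPow2 ((n : ℕ) + 1)),
      (memLp_fnPow2 ((n : ℕ) + 1)).coeFn_toLp] with w h1 h2
    rw [h1]
    simp only [Pi.smul_apply, smul_eq_mul]
    rw [show ⇑(xPow2 ((n : ℕ) + 1)) w = fnPow2 ((n : ℕ) + 1) w from h2]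
  filter_upwards [Lp_coeFn_sum Finset.univ (fun n : Fin N => b n • xPow2 ((n : ℕ) + 1)), hae]
    with w hsum hterm
  rw [hsum]
  simp only [Finset.sum_congr rfl fun n _ => hterm n]

lemma sq_integral_le {α : Type*} [MeasurableSpace α] (μ : Measure α) [IsProbabilityMeasure μ]
    {f : α → ℝ} (hf : Integrable f μ) (hf2 : Integrable (fun x => f x ^ (2:ℕ)) μ) :
    (∫ x, f x ∂μ) ^ (2:ℕ) ≤ ∫ x, f x ^ (2:ℕ) ∂μ := by
  set m := ∫ x, f x ∂μ with hm
  have h : 0 ≤ ∫ x, (f x - m) ^ (2:ℕ) ∂μ := integral_nonneg fun x => sq_nonneg _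
  have hexp : ∫ x, (f x - m) ^ (2:ℕ) ∂μ = (∫ x, f x ^ (2:ℕ) ∂μ) - m ^ (2:ℕ) := by
    have he : ∀ x, (f x - m) ^ (2:ℕ) = f x ^ (2:ℕ) - (2 * m) * f x + m ^ (2:ℕ) := by
      intro x; ring
    simp only [he]
    have hI2 : Integrable (fun x => (2 * m) * f x) μ := hf.const_mul _
    have hI1 : Integrable (fun x => f x ^ (2:ℕ) - (2 * m) * f x) μ := hf2.sub hI2
    rw [integral_add hI1 (integrable_const _), integral_sub hf2 hI2,
      MeasureTheory.integral_const_mul, integral_const]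
    simp [measure_univ, ← hm]
    ring
  rw [hexp] at h
  linarith

variable {N : ℕ}

lemma xiv_inj : Function.Injective (fun n : Fin N => xiv ((n : ℕ) + 1)) := by
  intro n m h
  have h1 : ((n : ℕ) + 1) = ((m : ℕ) + 1) := congrArg Prod.fst h
  exact Fin.ext (by omega)

lemma xiv_quad (p q : Fin N × Fin N)
    (h : xiv (((p.1 : Fin N) : ℕ) + 1) + xiv (((p.2 : Fin N) : ℕ) + 1)
        = xiv (((q.1 : Fin N) : ℕ) + 1) + xiv (((q.2 : Fin N) : ℕ) + 1)) :
    q = p ∨ q = Prod.swap p := by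
  have h1 := congrArg (fun v : ℕ × ℕ × ℕ => v.1) h
  have h2 := congrArg (fun v : ℕ × ℕ × ℕ => v.2.1) h
  have h3 := congrArg (fun v : ℕ × ℕ × ℕ => v.2.2) h
  simp only [xiv, Prod.fst_add, Prod.snd_add] at h1 h2 h3
  rcases key_inj _ _ _ _ h1 h2 h3 with ⟨e1, e2⟩ | ⟨e1, e2⟩
  · left
    have : q.1 = p.1 := Fin.ext (by omega)
    have : q.2 = p.2 := Fin.ext (by omega)
    exact Prod.ext (Fin.ext (by omega)).symm (Fin.ext (by omega)).symm
  · right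
    refine Prod.ext ?_ ?_
    · exact (Fin.ext (by omega) : q.1 = p.2)
    · exact (Fin.ext (by omega) : q.2 = p.1)

lemma Fc_cont (c : Fin N → ℂ) :
    Continuous (fun u : Om => ∑ n : Fin N, c n * psi (xiv ((n : ℕ) + 1)) u) :=
  continuous_finset_sum _ fun n _ => continuous_const.mul (psi_cont _)

lemma norm_V_eq (c : Fin N → ℂ) (z : Circle) :
    ‖∑ n : Fin N, ((z : ℂ) ^ ((n : ℕ) + 1) * c n) • xPow2 ((n : ℕ) + 1)‖
      = ∫ w, ‖∑ n : Fin N, c n * psi (xiv ((n : ℕ) + 1)) (z, w)‖ ∂(muT.prod muT) := by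
  rw [norm_sum_xPow2 (fun n : Fin N => (z : ℂ) ^ ((n : ℕ) + 1) * c n)]
  refine integral_congr_ae (Filter.Eventually.of_forall fun w => ?_)
  have he : ∑ n : Fin N, ((z : ℂ) ^ ((n : ℕ) + 1) * c n) * fnPow2 ((n : ℕ) + 1) w
      = ∑ n : Fin N, c n * psi (xiv ((n : ℕ) + 1)) (z, w) := by
    refine Finset.sum_congr rfl fun n _ => ?_
    rw [psi_xiv]
    ring
  exact congrArg norm he

lemma fubini_T1 (c : Fin N → ℂ) :
    ∫ z : Circle, ‖∑ n : Fin N, ((z : ℂ) ^ ((n : ℕ) + 1) * c n) • xPow2 ((n : ℕ) + 1)‖ ∂muT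
      = ∫ u, ‖∑ n : Fin N, c n * psi (xiv ((n : ℕ) + 1)) u‖ ∂mu3 := by
  have hu : Integrable (Function.uncurry fun (z : Circle) (w : Circle × Circle) =>
      ‖∑ n : Fin N, c n * psi (xiv ((n : ℕ) + 1)) (z, w)‖) (muT.prod (muT.prod muT)) := by
    exact cont_integrable (((Fc_cont c).comp (continuous_fst.prodMk continuous_snd)).norm)
  calc ∫ z : Circle, ‖∑ n : Fin N, ((z : ℂ) ^ ((n : ℕ) + 1) * c n) • xPow2 ((n : ℕ) + 1)‖ ∂muT
      = ∫ z : Circle, ∫ w, ‖∑ n : Fin N, c n * psi (xiv ((n : ℕ) + 1)) (z, w)‖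
          ∂(muT.prod muT) ∂muT := by
        refine integral_congr_ae (Filter.Eventually.of_forall fun z => ?_)
        exact norm_V_eq c z
    _ = ∫ u, ‖∑ n : Fin N, c n * psi (xiv ((n : ℕ) + 1)) u‖ ∂mu3 := by
        rw [MeasureTheory.integral_integral hu]
        refine integral_congr_ae (Filter.Eventually.of_forall fun u => ?_)
        simp

lemma main_upper (a c : Fin N → ℂ) (hc : ∀ n, ‖c n‖ = ‖a n‖) :
    ∫ z : Circle, ‖∑ n : Fin N, ((z : ℂ) ^ ((n : ℕ) + 1) * c n) • xPow2 ((n : ℕ) + 1)‖ ^ (2:ℝ) ∂muT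
      ≤ ∑ n : Fin N, ‖a n‖ ^ (2:ℕ) := by
  have hint2 : Integrable (fun u : Om =>
      ‖∑ n : Fin N, c n * psi (xiv ((n : ℕ) + 1)) u‖ ^ (2:ℕ)) (muT.prod (muT.prod muT)) :=
    cont_integrable (((Fc_cont c).norm).pow 2)
  have hpt : ∀ z : Circle,
      ‖∑ n : Fin N, ((z : ℂ) ^ ((n : ℕ) + 1) * c n) • xPow2 ((n : ℕ) + 1)‖ ^ (2:ℝ)
        ≤ ∫ w, ‖∑ n : Fin N, c n * psi (xiv ((n : ℕ) + 1)) (z, w)‖ ^ (2:ℕ) ∂(muT.prod muT) := by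
    intro z
    rw [norm_V_eq c z, show (2:ℝ) = ((2:ℕ):ℝ) by norm_num, Real.rpow_natCast]
    exact sq_integral_le _
      (cont_integrable (((Fc_cont c).comp (continuous_const.prodMk continuous_id)).norm))
      (cont_integrable ((((Fc_cont c).comp (continuous_const.prodMk continuous_id)).norm).pow 2))
  have hRint : Integrable (fun z : Circle =>
      ∫ w, ‖∑ n : Fin N, c n * psi (xiv ((n : ℕ) + 1)) (z, w)‖ ^ (2:ℕ) ∂(muT.prod muT)) muT :=
    hint2.integral_prod_left
  have huncurry : Integrable (Function.uncurry fun (z : Circle) (w : Circle × Circle) =>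
      ‖∑ n : Fin N, c n * psi (xiv ((n : ℕ) + 1)) (z, w)‖ ^ (2:ℕ)) (muT.prod (muT.prod muT)) :=
    cont_integrable ((((Fc_cont c).comp (continuous_fst.prodMk continuous_snd)).norm).pow 2)
  calc ∫ z : Circle, ‖∑ n : Fin N, ((z : ℂ) ^ ((n : ℕ) + 1) * c n) • xPow2 ((n : ℕ) + 1)‖ ^ (2:ℝ) ∂muT
      ≤ ∫ z : Circle, (∫ w, ‖∑ n : Fin N, c n * psi (xiv ((n : ℕ) + 1)) (z, w)‖ ^ (2:ℕ)
          ∂(muT.prod muT)) ∂muT :=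
        integral_mono_of_nonneg
          (Filter.Eventually.of_forall fun z => Real.rpow_nonneg (norm_nonneg _) _)
          hRint (Filter.Eventually.of_forall hpt)
    _ = ∫ u, ‖∑ n : Fin N, c n * psi (xiv ((n : ℕ) + 1)) u‖ ^ (2:ℕ) ∂mu3 := by
        rw [MeasureTheory.integral_integral huncurry]
        refine integral_congr_ae (Filter.Eventually.of_forall fun u => ?_)
        simp
    _ = ∑ n : Fin N, ‖c n‖ ^ (2:ℕ) := int_sq_eq _ xiv_inj c
    _ = ∑ n : Fin N, ‖a n‖ ^ (2:ℕ) := by simp_rw [hc]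

lemma main_lower (a : Fin N → ℂ) :
    Real.sqrt (∑ n : Fin N, ‖a n‖ ^ (2:ℕ))
      ≤ Real.sqrt 2 * ∫ u, ‖∑ n : Fin N, a n * psi (xiv ((n : ℕ) + 1)) u‖ ∂mu3 := by
  set F : Om → ℂ := fun u => ∑ n : Fin N, a n * psi (xiv ((n : ℕ) + 1)) u with hF
  have hFcont : Continuous F := Fc_cont a
  set S2 := ∑ n : Fin N, ‖a n‖ ^ (2:ℕ) with hS2def
  have hS2nn : 0 ≤ S2 := Finset.sum_nonneg fun n _ => by positivity
  set T1 := ∫ u, ‖F u‖ ∂mu3 with hT1def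
  have hT1nn : 0 ≤ T1 := integral_nonneg fun u => norm_nonneg _
  have hT2 : ∫ u, ‖F u‖ ^ (2:ℕ) ∂mu3 = S2 := int_sq_eq _ xiv_inj a
  set T4 := ∫ u, ‖F u‖ ^ (4:ℕ) ∂mu3 with hT4def
  have hT4nn : 0 ≤ T4 := integral_nonneg fun u => by positivity
  have hT4le : T4 ≤ 2 * S2 ^ (2:ℕ) := int_four_le _ xiv_quad a
  have hconj : Real.HolderConjugate (3/2) 3 :=
    Real.holderConjugate_iff.mpr ⟨by norm_num, by norm_num⟩
  have hf23 : Continuous fun u : Om => ‖F u‖ ^ ((2:ℝ)/3) :=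
    hFcont.norm.rpow_const fun u => Or.inr (by norm_num)
  have hf43 : Continuous fun u : Om => ‖F u‖ ^ ((4:ℝ)/3) :=
    hFcont.norm.rpow_const fun u => Or.inr (by norm_num)
  have hH := integral_mul_le_Lp_mul_Lq_of_nonneg (μ := mu3) hconj
    (f := fun u => ‖F u‖ ^ ((2:ℝ)/3)) (g := fun u => ‖F u‖ ^ ((4:ℝ)/3))
    (Filter.Eventually.of_forall fun u => Real.rpow_nonneg (norm_nonneg _) _)
    (Filter.Eventually.of_forall fun u => Real.rpow_nonneg (norm_nonneg _) _)
    (cont_memLp hf23 _) (cont_memLp hf43 _)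
  have e0 : ∀ u : Om, ‖F u‖ ^ ((2:ℝ)/3) * ‖F u‖ ^ ((4:ℝ)/3) = ‖F u‖ ^ (2:ℕ) := by
    intro u
    rw [← Real.rpow_add_of_nonneg (norm_nonneg _) (by norm_num) (by norm_num),
      show ((2:ℝ)/3 + (4:ℝ)/3) = ((2:ℕ):ℝ) by norm_num, Real.rpow_natCast]
  have e1 : ∀ u : Om, (‖F u‖ ^ ((2:ℝ)/3)) ^ ((3:ℝ)/2) = ‖F u‖ := by
    intro u
    rw [← Real.rpow_mul (norm_nonneg _), show ((2:ℝ)/3 * ((3:ℝ)/2)) = 1 by norm_num,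
      Real.rpow_one]
  have e2 : ∀ u : Om, (‖F u‖ ^ ((4:ℝ)/3)) ^ ((3:ℝ)) = ‖F u‖ ^ (4:ℕ) := by
    intro u
    rw [← Real.rpow_mul (norm_nonneg _), show ((4:ℝ)/3 * (3:ℝ)) = ((4:ℕ):ℝ) by norm_num,
      Real.rpow_natCast]
  simp only [e0, e1, e2] at hH
  rw [hT2] at hH
  rw [show (1:ℝ) / (3/2) = (2:ℝ)/3 by norm_num] at hH
  -- hH : S2 ≤ T1 ^ ((2:ℝ)/3) * T4 ^ (1/3)
  have hmono : T4 ^ ((1:ℝ)/3) ≤ (2 * S2 ^ (2:ℕ)) ^ ((1:ℝ)/3) :=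
    Real.rpow_le_rpow hT4nn hT4le (by norm_num)
  have hchain : S2 ≤ T1 ^ ((2:ℝ)/3) * (2 * S2 ^ (2:ℕ)) ^ ((1:ℝ)/3) := by
    refine hH.trans ?_
    exact mul_le_mul_of_nonneg_left hmono (Real.rpow_nonneg hT1nn _)
  have hc3 := pow_le_pow_left₀ hS2nn hchain 3
  rw [mul_pow] at hc3
  have e3 : (T1 ^ ((2:ℝ)/3)) ^ (3:ℕ) = T1 ^ (2:ℕ) := by
    rw [← Real.rpow_natCast (T1 ^ ((2:ℝ)/3)) 3, ← Real.rpow_mul hT1nn,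
      show ((2:ℝ)/3 * ((3:ℕ):ℝ)) = ((2:ℕ):ℝ) by norm_num, Real.rpow_natCast]
  have e4 : ((2 * S2 ^ (2:ℕ)) ^ ((1:ℝ)/3)) ^ (3:ℕ) = 2 * S2 ^ (2:ℕ) := by
    rw [← Real.rpow_natCast ((2 * S2 ^ (2:ℕ)) ^ ((1:ℝ)/3)) 3, ← Real.rpow_mul (by positivity),
      show ((1:ℝ)/3 * ((3:ℕ):ℝ)) = 1 by norm_num, Real.rpow_one]
  rw [e3, e4] at hc3
  have hfinal : S2 ≤ 2 * T1 ^ (2:ℕ) := by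
    rcases eq_or_lt_of_le hS2nn with h0 | hpos
    · rw [← h0]; positivity
    · nlinarith [hc3, mul_pos hpos hpos]
  calc Real.sqrt S2 ≤ Real.sqrt (2 * T1 ^ (2:ℕ)) := Real.sqrt_le_sqrt hfinal
    _ = Real.sqrt 2 * T1 := by
        rw [Real.sqrt_mul (by norm_num), Real.sqrt_sq hT1nn]

lemma norm_sgn {ε : Fin N → Bool} (n : Fin N) : ‖sgn ε n‖ = 1 := by
  unfold sgn
  split <;> simp

end myproof

/-- **Example.** For `X = L¹(𝕋²)` and `x_n = w₁^k` (`n = 2^k`), `x_n = w₂^{2^n}` (otherwise),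
the system `(x_n z^n)_n` is RUC in `H_2(𝕋, X)`. -/
theorem stmt10 : ∃ C : ℝ, 1 ≤ C ∧ ∀ (N : ℕ) (a : Fin N → ℂ),
    Eavg N (fun ε => (∫ z : Circle, ‖∑ n : Fin N,
        ((z : ℂ) ^ ((n : ℕ) + 1)) • (sgn ε n • (a n • xPow2 ((n : ℕ) + 1)))‖ ^ (2 : ℝ) ∂muT) ^ ((1 : ℝ) / 2)) ≤
      C * (∫ z : Circle, ‖∑ n : Fin N,
        ((z : ℂ) ^ ((n : ℕ) + 1)) • (a n • xPow2 ((n : ℕ) + 1))‖ ^ (2 : ℝ) ∂muT) ^ ((1 : ℝ) / 2) := by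
  refine ⟨Real.sqrt 2, ?_, fun N a => ?_⟩
  · rw [show (1:ℝ) = Real.sqrt 1 from (Real.sqrt_one).symm]
    exact Real.sqrt_le_sqrt (by norm_num)
  · simp only [smul_smul, mul_assoc]
    set S2 := ∑ n : Fin N, ‖a n‖ ^ (2:ℕ) with hS2
    set R := (∫ z : Circle, ‖∑ n : Fin N,
        ((z : ℂ) ^ ((n : ℕ) + 1) * a n) • xPow2 ((n : ℕ) + 1)‖ ^ (2:ℝ) ∂muT) ^ ((1:ℝ)/2) with hR
    set T1 := ∫ u, ‖∑ n : Fin N, a n * psi (xiv ((n : ℕ) + 1)) u‖ ∂mu3 with hT1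
    have hT1R : T1 ≤ R := by
      rw [hT1, ← fubini_T1 a]
      set g : Circle → ℝ := fun z =>
        ‖∑ n : Fin N, ((z : ℂ) ^ ((n : ℕ) + 1) * a n) • xPow2 ((n : ℕ) + 1)‖ with hg
      have hgcont : Continuous g := by
        apply Continuous.norm
        apply continuous_finset_sum
        intro n _
        exact ((continuous_subtype_val.pow _).mul continuous_const).smul continuous_const
      have hsq := sq_integral_le muT (cont_integrable hgcont) (cont_integrable (hgcont.pow 2))
      have hgnn : 0 ≤ ∫ z, g z ∂muT := integral_nonneg fun z => norm_nonneg _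
      have h2 : ∫ z, g z ^ (2:ℕ) ∂muT = ∫ z, g z ^ (2:ℝ) ∂muT := by
        refine integral_congr_ae (Filter.Eventually.of_forall fun z => ?_)
        show g z ^ (2:ℕ) = g z ^ (2:ℝ)
        rw [show (2:ℝ) = ((2:ℕ):ℝ) by norm_num, Real.rpow_natCast]
      calc ∫ z, g z ∂muT = Real.sqrt ((∫ z, g z ∂muT) ^ (2:ℕ)) := (Real.sqrt_sq hgnn).symm
        _ ≤ Real.sqrt (∫ z, g z ^ (2:ℕ) ∂muT) := Real.sqrt_le_sqrt hsq
        _ = R := by rw [h2, hR, Real.sqrt_eq_rpow]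
    have hmain : ∀ ε : Fin N → Bool,
        (∫ z : Circle, ‖∑ n : Fin N,
          ((z : ℂ) ^ ((n : ℕ) + 1) * (sgn ε n * a n)) • xPow2 ((n : ℕ) + 1)‖ ^ (2:ℝ) ∂muT)
            ^ ((1:ℝ)/2) ≤ Real.sqrt 2 * R := by
      intro ε
      have hup := main_upper a (fun n => sgn ε n * a n) (fun n => by
        rw [norm_mul, norm_sgn, one_mul])
      have h1 : (∫ z : Circle, ‖∑ n : Fin N,
          ((z : ℂ) ^ ((n : ℕ) + 1) * (sgn ε n * a n)) • xPow2 ((n : ℕ) + 1)‖ ^ (2:ℝ) ∂muT)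
            ^ ((1:ℝ)/2) ≤ S2 ^ ((1:ℝ)/2) :=
        Real.rpow_le_rpow (integral_nonneg fun z => Real.rpow_nonneg (norm_nonneg _) _)
          hup (by norm_num)
      have h2 : S2 ^ ((1:ℝ)/2) = Real.sqrt S2 := (Real.sqrt_eq_rpow S2).symm
      have h3 : Real.sqrt S2 ≤ Real.sqrt 2 * T1 := main_lower a
      have h4 : Real.sqrt 2 * T1 ≤ Real.sqrt 2 * R :=
        mul_le_mul_of_nonneg_left hT1R (Real.sqrt_nonneg 2)
      calc (∫ z : Circle, ‖∑ n : Fin N,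
          ((z : ℂ) ^ ((n : ℕ) + 1) * (sgn ε n * a n)) • xPow2 ((n : ℕ) + 1)‖ ^ (2:ℝ) ∂muT)
            ^ ((1:ℝ)/2) ≤ S2 ^ ((1:ℝ)/2) := h1
        _ = Real.sqrt S2 := h2
        _ ≤ Real.sqrt 2 * T1 := h3
        _ ≤ Real.sqrt 2 * R := h4
    unfold Eavg
    have hsum : ∑ ε : Fin N → Bool, (∫ z : Circle, ‖∑ n : Fin N,
        ((z : ℂ) ^ ((n : ℕ) + 1) * (sgn ε n * a n)) • xPow2 ((n : ℕ) + 1)‖ ^ (2:ℝ) ∂muT)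
          ^ ((1:ℝ)/2) ≤ (2 ^ N : ℝ) * (Real.sqrt 2 * R) := by
      calc ∑ ε : Fin N → Bool, (∫ z : Circle, ‖∑ n : Fin N,
            ((z : ℂ) ^ ((n : ℕ) + 1) * (sgn ε n * a n)) • xPow2 ((n : ℕ) + 1)‖ ^ (2:ℝ) ∂muT)
              ^ ((1:ℝ)/2)
          ≤ ∑ _ε : Fin N → Bool, Real.sqrt 2 * R := Finset.sum_le_sum fun ε _ => hmain ε
        _ = (Fintype.card (Fin N → Bool) : ℝ) * (Real.sqrt 2 * R) := by
            rw [Finset.sum_const, nsmul_eq_mul, Finset.card_univ]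
        _ = (2 ^ N : ℝ) * (Real.sqrt 2 * R) := by
            norm_num [Fintype.card_fun]
    have hpos : (0:ℝ) < 2 ^ N := by positivity
    calc (2 ^ N : ℝ)⁻¹ * ∑ ε : Fin N → Bool, (∫ z : Circle, ‖∑ n : Fin N,
          ((z : ℂ) ^ ((n : ℕ) + 1) * (sgn ε n * a n)) • xPow2 ((n : ℕ) + 1)‖ ^ (2:ℝ) ∂muT)
            ^ ((1:ℝ)/2)
        ≤ (2 ^ N : ℝ)⁻¹ * ((2 ^ N : ℝ) * (Real.sqrt 2 * R)) :=
          mul_le_mul_of_nonneg_left hsum (by positivity)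
      _ = Real.sqrt 2 * R := by field_simp
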